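/- Suppose n > r, the columns of V ∈ ℂ^{n×r} form a Chebyshev system (every r×r submatrix formed by r rows of V is nonsingular), and Vû is a vector of best sup-norm approximation to a. Then the maximal absolute residual |a_j − (Vû)_j| = ‖a − Vû‖_∞ is attained at at least r+1 distinct indices j. -/

import Mathlib

/-- Chebyshev system + best approximation ⟹ the maximal absolute residual is
attained at at least `r + 1` distinct indices. -/
theorem stmt_3 (n r : ℕ) (hnr : r < n) (V : Matrix (Fin n) (Fin r) ℂ) (a : Fin n → ℂ)
    (hcheb : ∀ f : Fin r → Fin n, Function.Injective f →
      (Matrix.of fun k i => V (f k) i).det ≠ 0)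
    (uhat : Fin r → ℂ)
    (hopt : ∀ u : Fin r → ℂ, ‖a - V.mulVec uhat‖ ≤ ‖a - V.mulVec u‖) :
    ∃ S : Finset (Fin n), r + 1 ≤ S.card ∧
      ∀ j ∈ S, ‖a j - V.mulVec uhat j‖ = ‖a - V.mulVec uhat‖ := by
  classical
  set e : Fin n → ℂ := a - V.mulVec uhat with he
  set M : ℝ := ‖e‖ with hM
  have hej : ∀ j, (a j - V.mulVec uhat j) = e j := fun j => rfl
  set S : Finset (Fin n) := Finset.univ.filter (fun j => ‖e j‖ = M) with hS
  refine ⟨S, ?_, ?_⟩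
  swap
  · intro j hj
    rw [hS, Finset.mem_filter] at hj
    exact hj.2
  -- main goal: r + 1 ≤ S.card
  by_cases hM0 : M = 0
  · -- e = 0, so S = univ
    have he0 : e = 0 := norm_eq_zero.mp hM0
    have : S = Finset.univ := by
      rw [hS]
      apply Finset.filter_true_of_mem
      intro j _
      rw [he0, hM0]
      simp
    rw [this]
    simpa using hnr
  have hMpos : 0 < M := lt_of_le_of_ne (norm_nonneg e) (Ne.symm hM0)
  by_contra hcard
  push_neg at hcard
  have hcard' : S.card ≤ r := Nat.lt_succ_iff.mp hcard
  -- extend S to a set T of cardinality r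
  obtain ⟨T, hST, _, hTcard⟩ :=
    Finset.exists_subsuperset_card_eq (Finset.subset_univ S) hcard'
      (by simpa using hnr.le)
  -- the injection f : Fin r → Fin n enumerating T
  set f : Fin r → Fin n := fun k => (T.orderIsoOfFin hTcard k : Fin n) with hf
  have hfinj : Function.Injective f := by
    intro x y hxy
    exact (T.orderIsoOfFin hTcard).injective (Subtype.ext hxy)
  have hfmem : ∀ j ∈ T, ∃ k, f k = j := by
    intro j hj
    obtain ⟨k, hk⟩ := (T.orderIsoOfFin hTcard).surjective ⟨j, hj⟩
    exact ⟨k, congrArg Subtype.val hk⟩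
  set A : Matrix (Fin r) (Fin r) ℂ := Matrix.of (fun k i => V (f k) i) with hA
  have hAdet : A.det ≠ 0 := hcheb f hfinj
  have hAunit : IsUnit A.det := isUnit_iff_ne_zero.mpr hAdet
  set u : Fin r → ℂ := A⁻¹.mulVec (fun k => e (f k)) with hu
  have hsolve : ∀ k, A.mulVec u k = e (f k) := by
    intro k
    have : A.mulVec u = (A * A⁻¹).mulVec (fun k => e (f k)) := by
      rw [hu, Matrix.mulVec_mulVec]
    rw [this, Matrix.mul_nonsing_inv A hAunit, Matrix.one_mulVec]
  have hVu : ∀ j ∈ T, V.mulVec u j = e j := by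
    intro j hj
    obtain ⟨k, hk⟩ := hfmem j hj
    have : V.mulVec u (f k) = A.mulVec u k := rfl
    rw [← hk, this, hsolve]
  -- bound off T
  have hTc : (Tᶜ : Finset (Fin n)).Nonempty := by
    rw [← Finset.card_pos, Finset.card_compl, hTcard]
    simpa using Nat.sub_pos_of_lt (by simpa using hnr)
  set m : ℝ := (Tᶜ : Finset (Fin n)).sup' hTc (fun j => ‖e j‖) with hm
  have hmlt : m < M := by
    rw [hm, Finset.sup'_lt_iff]
    intro j hj
    have hjS : j ∉ S := fun h => (Finset.mem_compl.mp hj) (hST h)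
    have hle : ‖e j‖ ≤ M := by
      have := norm_le_pi_norm e j
      simpa [hM] using this
    rcases lt_or_eq_of_le hle with h | h
    · exact h
    · exact absurd (by rw [hS]; simp [h]) hjS
  set C : ℝ := ‖V.mulVec u‖ with hC
  have hC0 : 0 ≤ C := norm_nonneg _
  set t : ℝ := min (1/2) ((M - m) / (2 * (C + 1))) with ht
  have ht0 : 0 < t := by
    apply lt_min
    · norm_num
    · apply div_pos (by linarith) (by linarith)
  have ht1 : t < 1 := lt_of_le_of_lt (min_le_left _ _) (by norm_num)
  have htC : t * C < M - m := by
    have h1 : t ≤ (M - m) / (2 * (C + 1)) := min_le_right _ _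
    have h2 : t * (C + 1) ≤ (M - m) / 2 := by
      rw [div_mul_eq_div_div] at h1
      calc t * (C + 1) ≤ ((M - m) / 2 / (C + 1)) * (C + 1) := by
            apply mul_le_mul_of_nonneg_right h1 (by linarith)
        _ = (M - m) / 2 := by field_simp
    nlinarith
  -- the competing approximation
  have hkey := hopt (uhat + (t : ℂ) • u)
  have hexp : a - V.mulVec (uhat + (t : ℂ) • u) = e - (t : ℂ) • V.mulVec u := by
    rw [Matrix.mulVec_add, Matrix.mulVec_smul, he]
    abel
  rw [hexp] at hkey
  have hlt : ‖e - (t : ℂ) • V.mulVec u‖ < M := by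
    rw [pi_norm_lt_iff hMpos]
    intro j
    by_cases hj : j ∈ T
    · have : (e - (t : ℂ) • V.mulVec u) j = (1 - (t : ℂ)) * e j := by
        simp [hVu j hj]
        ring
      rw [this]
      have habs : ‖(1 - (t : ℂ)) * e j‖ = (1 - t) * ‖e j‖ := by
        rw [norm_mul]
        congr 1
        · have : (1 - (t : ℂ)) = ((1 - t : ℝ) : ℂ) := by push_cast; ring
          rw [this, Complex.norm_real, Real.norm_eq_abs, abs_of_pos (by linarith)]
      rw [habs]
      have hle : ‖e j‖ ≤ M := by
        have := norm_le_pi_norm e j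
        simpa [hM] using this
      calc (1 - t) * ‖e j‖ ≤ (1 - t) * M := by
            apply mul_le_mul_of_nonneg_left hle (by linarith)
        _ < M := by nlinarith
    · have h1 : ‖(e - (t : ℂ) • V.mulVec u) j‖ ≤ ‖e j‖ + t * ‖V.mulVec u j‖ := by
        have : (e - (t : ℂ) • V.mulVec u) j = e j - (t : ℂ) * V.mulVec u j := by simp
        rw [this]
        calc ‖e j - (t : ℂ) * V.mulVec u j‖ ≤ ‖e j‖ + ‖(t : ℂ) * V.mulVec u j‖ :=
              norm_sub_le _ _
          _ = ‖e j‖ + t * ‖V.mulVec u j‖ := by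
              rw [norm_mul, Complex.norm_real, Real.norm_eq_abs,
                abs_of_pos ht0]
      have h2 : ‖e j‖ ≤ m := by
        rw [hm]
        exact Finset.le_sup' (fun j => ‖e j‖) (Finset.mem_compl.mpr hj)
      have h3 : ‖V.mulVec u j‖ ≤ C := norm_le_pi_norm _ j
      calc ‖(e - (t : ℂ) • V.mulVec u) j‖ ≤ ‖e j‖ + t * ‖V.mulVec u j‖ := h1
        _ ≤ m + t * C := by
            have : t * ‖V.mulVec u j‖ ≤ t * C :=
              mul_le_mul_of_nonneg_left h3 ht0.le
            linarith
        _ < M := by linarith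
  exact absurd hkey (not_le.mpr hlt)
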